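/- If S is a subset of the projective plane P^2(F_q) with |S| = q+2, and there exists a point P in S such that no line through P contains at least three points of S, then there is a projective change of coordinates under which S equals S_f := {(c : f(c) : 1) : c in F_q} ∪ {(1:0:0), (0:1:0)} for some polynomial f(X) in F_q[X]. -/

import Mathlib

open Polynomial

noncomputable section

lemma vec3_ne_zero_last {F : Type} [Field F] (c d : F) : ![c, d, 1] ≠ 0 := by
  intro h; have := congrFun h 2; simp at this

lemma vec3_e0_ne_zero {F : Type} [Field F] : (![1, 0, 0] : Fin 3 → F) ≠ 0 := by
  intro h; have := congrFun h 0; simp at this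

lemma vec3_e1_ne_zero {F : Type} [Field F] : (![0, 1, 0] : Fin 3 → F) ≠ 0 := by
  intro h; have := congrFun h 1; simp at this

/-- The set `S_f = {(c : f(c) : 1) : c ∈ F_q} ∪ {(1:0:0), (0:1:0)}` in `ℙ²(F_q)`. -/
def Sf {F : Type} [Field F] (f : Polynomial F) : Set (Projectivization F (Fin 3 → F)) :=
  {p | ∃ c : F, p = Projectivization.mk F ![c, f.eval c, 1] (vec3_ne_zero_last c (f.eval c))}
    ∪ {Projectivization.mk F ![1, 0, 0] vec3_e0_ne_zero,
       Projectivization.mk F ![0, 1, 0] vec3_e1_ne_zero}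


open Projectivization

abbrev Pj (F : Type) [Field F] := Projectivization F (Fin 3 → F)

instance {F V : Type*} [Field F] [AddCommGroup V] [Module F V] [Finite V] :
    Finite (Projectivization F V) := Quotient.finite _

/-- a linear functional on F³ -/
def lfun {F : Type} [Field F] (a b c : F) : (Fin 3 → F) →ₗ[F] F where
  toFun v := a * v 0 + b * v 1 + c * v 2
  map_add' := by intros x y; simp only [Pi.add_apply]; ring
  map_smul' := by intros t x; simp only [Pi.smul_apply, smul_eq_mul, RingHom.id_apply]; ring

lemma lfun_apply {F : Type} [Field F] (a b c : F) (v : Fin 3 → F) :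
    lfun a b c v = a * v 0 + b * v 1 + c * v 2 := rfl

lemma finrank_ker_two {F : Type} [Field F] (φ : (Fin 3 → F) →ₗ[F] F)
    (hs : Function.Surjective φ) : Module.finrank F (LinearMap.ker φ) = 2 := by
  have h := LinearMap.finrank_range_add_finrank_ker φ
  rw [LinearMap.range_eq_top.2 hs] at h
  simp [Module.finrank_pi, finrank_top] at h
  omega

lemma three_le_ncard {α : Type*} [Finite α] {s : Set α} {a b c : α} (ha : a ∈ s) (hb : b ∈ s)
    (hc : c ∈ s) (hab : a ≠ b) (hac : a ≠ c) (hbc : b ≠ c) : 3 ≤ s.ncard := by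
  have hsub : ({a, b, c} : Set α) ⊆ s := by
    intro x hx; rcases hx with h | h | h <;> simp_all
  have h3 : ({a, b, c} : Set α).ncard = 3 := by
    rw [Set.ncard_insert_of_notMem (by simp [hab, hac]), Set.ncard_pair hbc]
  calc 3 = ({a, b, c} : Set α).ncard := h3.symm
    _ ≤ s.ncard := Set.ncard_le_ncard hsub s.toFinite

/-- first affine coordinate -/
def xc {F : Type} [Field F] (x : Pj F) : F := x.rep 0 / x.rep 2

def yc {F : Type} [Field F] (x : Pj F) : F := x.rep 1 / x.rep 2

lemma xc_yc_mk {F : Type} [Field F] (a b : F) :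
    xc (mk F ![a, b, 1] (vec3_ne_zero_last a b)) = a ∧
    yc (mk F ![a, b, 1] (vec3_ne_zero_last a b)) = b := by
  set x := mk F ![a, b, 1] (vec3_ne_zero_last a b) with hx
  have h : mk F x.rep x.rep_nonzero = mk F ![a, b, 1] (vec3_ne_zero_last a b) := by
    rw [mk_rep]
  rw [mk_eq_mk_iff] at h
  obtain ⟨u, hu⟩ := h
  have h0 : x.rep 0 = (u : F) * a := by rw [← hu]; simp [Units.smul_def]
  have h1 : x.rep 1 = (u : F) * b := by rw [← hu]; simp [Units.smul_def]
  have h2 : x.rep 2 = (u : F) := by rw [← hu]; simp [Units.smul_def]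
  constructor <;> simp only [xc, yc, h0, h1, h2] <;> field_simp

lemma eq_mk_of_rep2_ne {F : Type} [Field F] (x : Pj F) (h : x.rep 2 ≠ 0) :
    x = mk F ![xc x, yc x, 1] (vec3_ne_zero_last _ _) := by
  conv_lhs => rw [← mk_rep x]
  rw [mk_eq_mk_iff]
  refine ⟨Units.mk0 (x.rep 2) h, ?_⟩
  funext i
  fin_cases i <;> simp [xc, yc, Units.smul_def] <;> field_simp

lemma e0_ne_e1 {F : Type} [Field F] :
    mk F ![1,0,0] vec3_e0_ne_zero ≠ mk F ![0,1,0] (vec3_e1_ne_zero (F := F)) := by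
  rw [Ne, mk_eq_mk_iff]
  rintro ⟨u, hu⟩
  have := congrFun hu 0
  simp [Units.smul_def] at this

lemma mk_congr2 {F : Type} [Field F] {a b a' b' : F} (h1 : a = a') (h2 : b = b') :
    mk F ![a, b, 1] (vec3_ne_zero_last a b) = mk F ![a', b', 1] (vec3_ne_zero_last a' b') := by
  subst h1; subst h2; rfl

lemma core {F : Type} [Field F] [Fintype F] (T : Set (Projectivization F (Fin 3 → F)))
    (hT : T.ncard = Fintype.card F + 2)
    (h0 : Projectivization.mk F ![1,0,0] vec3_e0_ne_zero ∈ T)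
    (h1 : Projectivization.mk F ![0,1,0] vec3_e1_ne_zero ∈ T)
    (hl : ∀ W : Submodule F (Fin 3 → F), Module.finrank F W = 2 →
      (Projectivization.mk F ![0,1,0] vec3_e1_ne_zero).submodule ≤ W →
      {x ∈ T | x.submodule ≤ W}.ncard ≤ 2) :
    ∃ f : Polynomial F, T = Sf f := by
  classical
  set e0 : Projectivization F (Fin 3 → F) := mk F ![1,0,0] vec3_e0_ne_zero with he0
  set e1 : Projectivization F (Fin 3 → F) := mk F ![0,1,0] vec3_e1_ne_zero with he1
  -- every other point has nonzero last rep coordinate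
  have hz : ∀ x ∈ T, x ≠ e0 → x ≠ e1 → x.rep 2 ≠ 0 := by
    intro x hx hx0 hx1 hrep
    set W := LinearMap.ker (lfun (0:F) 0 1) with hW
    have hWr : Module.finrank F W = 2 := by
      apply finrank_ker_two
      intro t; exact ⟨![0, 0, t], by simp [lfun_apply]⟩
    have hmem : ∀ v : Fin 3 → F, v ∈ W ↔ v 2 = 0 := by
      intro v; simp [hW, LinearMap.mem_ker, lfun_apply]
    have hWe1 : e1.submodule ≤ W := by
      rw [he1, submodule_mk, Submodule.span_singleton_le_iff_mem, hmem]; simp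
    have hWe0 : e0.submodule ≤ W := by
      rw [he0, submodule_mk, Submodule.span_singleton_le_iff_mem, hmem]; simp
    have hWx : x.submodule ≤ W := by
      rw [submodule_eq, Submodule.span_singleton_le_iff_mem, hmem]; exact hrep
    have h3 : 3 ≤ {y ∈ T | y.submodule ≤ W}.ncard :=
      three_le_ncard (a := e0) (b := e1) (c := x) ⟨h0, hWe0⟩ ⟨h1, hWe1⟩ ⟨hx, hWx⟩
        e0_ne_e1 (Ne.symm hx0) (Ne.symm hx1)
    have := hl W hWr hWe1
    omega
  -- injectivity of xc on T \ {e0, e1}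
  have hinj : ∀ x ∈ T, x ≠ e0 → x ≠ e1 → ∀ x' ∈ T, x' ≠ e0 → x' ≠ e1 →
      xc x = xc x' → x = x' := by
    intro x hx hx0 hx1 x' hx' hx'0 hx'1 hxx
    by_contra hne
    set c := xc x with hc
    set W := LinearMap.ker (lfun (1:F) 0 (-c)) with hW
    have hWr : Module.finrank F W = 2 := by
      apply finrank_ker_two
      intro t; exact ⟨![t, 0, 0], by simp [lfun_apply]⟩
    have hmem : ∀ v : Fin 3 → F, v ∈ W ↔ v 0 - c * v 2 = 0 := by
      intro v; simp [hW, LinearMap.mem_ker, lfun_apply]; ring_nf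
    have hWe1 : e1.submodule ≤ W := by
      rw [he1, submodule_mk, Submodule.span_singleton_le_iff_mem, hmem]; simp
    have hWx : x.submodule ≤ W := by
      rw [submodule_eq, Submodule.span_singleton_le_iff_mem, hmem]
      have := hz x hx hx0 hx1
      rw [hc, xc, div_mul_cancel₀ _ this, sub_self]
    have hWx' : x'.submodule ≤ W := by
      rw [submodule_eq, Submodule.span_singleton_le_iff_mem, hmem]
      have h2 := hz x' hx' hx'0 hx'1
      have : c = x'.rep 0 / x'.rep 2 := by rw [hxx]; rfl
      rw [this]
      field_simp
      simp
    have h3 : 3 ≤ {y ∈ T | y.submodule ≤ W}.ncard :=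
      three_le_ncard (a := e1) (b := x) (c := x') ⟨h1, hWe1⟩ ⟨hx, hWx⟩ ⟨hx', hWx'⟩
        (Ne.symm hx1) (Ne.symm hx'1) hne
    have := hl W hWr hWe1
    omega
  -- counting
  set D := T \ {e0, e1} with hD
  have hDmem : ∀ x ∈ D, x ∈ T ∧ x ≠ e0 ∧ x ≠ e1 := by
    intro x hx; rw [hD] at hx; simp at hx; tauto
  have hDcard : D.ncard = Fintype.card F := by
    rw [hD, Set.ncard_diff (by simp [Set.insert_subset_iff, h0, h1]), hT,
      Set.ncard_pair e0_ne_e1]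
    omega
  have hinjOn : Set.InjOn xc D := by
    intro x hx y hy hxy
    obtain ⟨hxT, hx0, hx1⟩ := hDmem x hx
    obtain ⟨hyT, hy0, hy1⟩ := hDmem y hy
    exact hinj x hxT hx0 hx1 y hyT hy0 hy1 hxy
  have himg : xc '' D = Set.univ := by
    apply Set.eq_of_subset_of_ncard_le (Set.subset_univ _) _ Set.finite_univ
    rw [Set.ncard_image_of_injOn hinjOn, hDcard, Set.ncard_univ, Nat.card_eq_fintype_card]
  have hsurj : ∀ c : F, ∃ x ∈ D, xc x = c := by
    intro c
    have : c ∈ xc '' D := by rw [himg]; trivial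
    obtain ⟨x, hx, hxc⟩ := this; exact ⟨x, hx, hxc⟩
  choose pt hptD hptxc using hsurj
  set f : Polynomial F := Lagrange.interpolate Finset.univ id (fun c => yc (pt c)) with hf
  have hfe : ∀ c : F, f.eval c = yc (pt c) := by
    intro c
    have := Lagrange.eval_interpolate_at_node (v := id) (s := Finset.univ)
      (r := fun c => yc (pt c)) (Set.injOn_id _) (Finset.mem_univ c)
    simpa [hf] using this
  have huniq : ∀ x ∈ D, x = pt (xc x) := by
    intro x hx
    obtain ⟨hxT, hx0, hx1⟩ := hDmem x hx
    obtain ⟨hT', h0', h1'⟩ := hDmem _ (hptD (xc x))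
    exact hinj x hxT hx0 hx1 _ hT' h0' h1' (hptxc (xc x)).symm
  refine ⟨f, ?_⟩
  ext x
  constructor
  · intro hx
    by_cases hx0 : x = e0
    · exact Or.inr (Or.inl hx0)
    by_cases hx1 : x = e1
    · exact Or.inr (Or.inr hx1)
    have hxD : x ∈ D := by rw [hD]; simp [hx, hx0, hx1]
    have h2 := hz x hx hx0 hx1
    have hxm := eq_mk_of_rep2_ne x h2
    have hyx : yc x = f.eval (xc x) := by rw [hfe, ← huniq x hxD]
    refine Or.inl ⟨xc x, hxm.trans ?_⟩
    rw [hyx]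
  · rintro (⟨c, rfl⟩ | h | h)
    · obtain ⟨hT', h0', h1'⟩ := hDmem _ (hptD c)
      have h2 := hz _ hT' h0' h1'
      have hm := eq_mk_of_rep2_ne (pt c) h2
      have : mk F ![c, f.eval c, 1] (vec3_ne_zero_last _ _) = pt c :=
        (mk_congr2 (hptxc c).symm (hfe c)).trans hm.symm
      rw [this]; exact hT'
    · rw [h]; exact h0
    · rw [h]; exact h1

lemma mk_eq_of_eq {F : Type} [Field F] {v w : Fin 3 → F} (h : v = w) (hv : v ≠ 0) (hw : w ≠ 0) :
    mk F v hv = mk F w hw := by subst h; rfl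

lemma submodule_map_eq {F : Type} [Field F] (g : (Fin 3 → F) ≃ₗ[F] (Fin 3 → F))
    (x : Projectivization F (Fin 3 → F)) :
    (Projectivization.map g.toLinearMap g.injective x).submodule
      = x.submodule.map g.toLinearMap := by
  induction x using Projectivization.ind with
  | h v hv =>
    rw [Projectivization.map_mk, submodule_mk, submodule_mk]
    rw [Submodule.map_span, Set.image_singleton]

theorem statement0' (F : Type) [Field F] [Fintype F]
    (S : Set (Projectivization F (Fin 3 → F)))
    (hcard : S.ncard = Fintype.card F + 2)
    (P : Projectivization F (Fin 3 → F)) (hP : P ∈ S)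
    (hline : ∀ W : Submodule F (Fin 3 → F), Module.finrank F W = 2 →
      P.submodule ≤ W → {x ∈ S | x.submodule ≤ W}.ncard ≤ 2) :
    ∃ (f : Polynomial F) (g : (Fin 3 → F) ≃ₗ[F] (Fin 3 → F)),
      Projectivization.map g.toLinearMap g.injective '' S = Sf f := by
  classical
  obtain ⟨Q, hQS, hQP⟩ := Set.exists_ne_of_one_lt_ncard (s := S) (by omega) P
  set v0 := P.rep with hv0
  set v1 := Q.rep with hv1
  have hli2 : LinearIndependent F ![v1, v0] := by
    rw [LinearIndependent.pair_iff' Q.rep_nonzero]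
    intro a ha
    apply hQP
    have h : mk F v0 P.rep_nonzero = mk F v1 Q.rep_nonzero := by
      rw [mk_eq_mk_iff']
      exact ⟨a, ha⟩
    rw [← mk_rep Q, ← mk_rep P, h]
  have hspan_ne : ∃ v2, v2 ∉ Submodule.span F (Set.range ![v1, v0]) := by
    by_contra h
    push_neg at h
    have htop : Submodule.span F (Set.range ![v1, v0]) = ⊤ := Submodule.eq_top_iff'.2 h
    have h2 : Module.finrank F (Submodule.span F (Set.range ![v1, v0])) = 2 := by
      rw [finrank_span_eq_card hli2]; simp
    rw [htop] at h2
    simp [finrank_top, Module.finrank_pi] at h2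
  obtain ⟨v2, hv2⟩ := hspan_ne
  have hli3 : LinearIndependent F ![v2, v1, v0] :=
    LinearIndependent.fin_cons hli2 hv2
  have hcard3 : Fintype.card (Fin 3) = Module.finrank F (Fin 3 → F) := by
    simp [Module.finrank_pi]
  set b := basisOfLinearIndependentOfCardEqFinrank hli3 hcard3 with hb
  have hb_apply : ∀ i, b i = ![v2, v1, v0] i := fun i =>
    congrFun (coe_basisOfLinearIndependentOfCardEqFinrank hli3 hcard3) i
  set g : (Fin 3 → F) ≃ₗ[F] (Fin 3 → F) :=
    b.equiv (Pi.basisFun F (Fin 3)) (finRotate 3).symm with hg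
  have hgv1 : g v1 = ![1, 0, 0] := by
    have h1 : v1 = b 1 := (hb_apply 1).symm
    rw [h1, hg, Module.Basis.equiv_apply]
    have : (finRotate 3).symm 1 = 0 := by decide
    rw [this]
    funext i; fin_cases i <;> simp [Pi.basisFun_apply, Pi.single]
  have hgv0 : g v0 = ![0, 1, 0] := by
    have h1 : v0 = b 2 := (hb_apply 2).symm
    rw [h1, hg, Module.Basis.equiv_apply]
    have : (finRotate 3).symm 2 = 1 := by decide
    rw [this]
    funext i; fin_cases i <;> simp [Pi.basisFun_apply, Pi.single]
  set T := Projectivization.map g.toLinearMap g.injective '' S with hTdef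
  have hmapinj : Function.Injective (Projectivization.map g.toLinearMap g.injective) :=
    Projectivization.map_injective _ _
  have hT : T.ncard = Fintype.card F + 2 := by
    rw [hTdef, Set.ncard_image_of_injective S hmapinj, hcard]
  have h0T : mk F ![1,0,0] vec3_e0_ne_zero ∈ T := by
    refine ⟨Q, hQS, ?_⟩
    conv_lhs => rw [← mk_rep Q]
    rw [Projectivization.map_mk]
    exact mk_eq_of_eq hgv1 _ _
  have h1T : mk F ![0,1,0] vec3_e1_ne_zero ∈ T := by
    refine ⟨P, hP, ?_⟩
    conv_lhs => rw [← mk_rep P]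
    rw [Projectivization.map_mk]
    exact mk_eq_of_eq hgv0 _ _
  have hlT : ∀ W : Submodule F (Fin 3 → F), Module.finrank F W = 2 →
      (mk F ![0,1,0] vec3_e1_ne_zero).submodule ≤ W →
      {x ∈ T | x.submodule ≤ W}.ncard ≤ 2 := by
    intro W hW2 hWe1
    set W' := W.comap g.toLinearMap with hW'
    have hcm : W' = W.map (g.symm : (Fin 3 → F) →ₗ[F] (Fin 3 → F)) := by
      rw [hW', Submodule.comap_equiv_eq_map_symm]
    have hW'2 : Module.finrank F W' = 2 := by
      rw [hcm, LinearEquiv.finrank_map_eq, hW2]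
    have hPW' : P.submodule ≤ W' := by
      rw [Projectivization.submodule_eq, Submodule.span_singleton_le_iff_mem,
        Submodule.mem_comap]
      have : ![0,1,0] ∈ W := by
        rw [submodule_mk, Submodule.span_singleton_le_iff_mem] at hWe1
        exact hWe1
      rw [show g.toLinearMap P.rep = ![0,1,0] from hgv0]
      exact this
    have hset : {x ∈ T | x.submodule ≤ W}
        = Projectivization.map g.toLinearMap g.injective '' {x ∈ S | x.submodule ≤ W'} := by
      ext y
      constructor
      · rintro ⟨⟨x, hxS, rfl⟩, hsub⟩
        rw [submodule_map_eq, Submodule.map_le_iff_le_comap] at hsub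
        exact ⟨x, ⟨hxS, hsub⟩, rfl⟩
      · rintro ⟨x, ⟨hxS, hsub⟩, rfl⟩
        refine ⟨⟨x, hxS, rfl⟩, ?_⟩
        rw [submodule_map_eq, Submodule.map_le_iff_le_comap]
        exact hsub
    rw [hset, Set.ncard_image_of_injective _ hmapinj]
    exact hline W' hW'2 hPW'
  obtain ⟨f, hf⟩ := core T hT h0T h1T hlT
  exact ⟨f, g, hf⟩

theorem statement0 (F : Type) [Field F] [Fintype F]
    (S : Set (Projectivization F (Fin 3 → F)))
    (hcard : S.ncard = Fintype.card F + 2)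
    (P : Projectivization F (Fin 3 → F)) (hP : P ∈ S)
    (hline : ∀ W : Submodule F (Fin 3 → F), Module.finrank F W = 2 →
      P.submodule ≤ W → {x ∈ S | x.submodule ≤ W}.ncard ≤ 2) :
    ∃ (f : Polynomial F) (g : (Fin 3 → F) ≃ₗ[F] (Fin 3 → F)),
      Projectivization.map g.toLinearMap g.injective '' S = Sf f := by
  exact statement0' F S hcard P hP hline
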